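/- Fix μ ≥ 0. The function F : ℝ → ℝ defined by F(k) = ∫₀^1 β^{-2} exp(−1/β) exp(−β μ² k²) dβ is real-analytic on all of ℝ. -/

import Mathlib

open MeasureTheory

/-- The function `F(k) = ∫₀^1 β⁻² e^{-1/β} e^{-βμ²k²} dβ`, appearing in the
small-`α` contribution `F(k)/k²` of the non-planar tadpole, is real-analytic
on all of `ℝ`. -/
theorem tadpole_small_alpha_analytic (μ : ℝ) (hμ : 0 ≤ μ) :
    AnalyticOnNhd ℝ
      (fun k : ℝ =>
        ∫ β in (0 : ℝ)..1, β ^ (-2 : ℤ) * Real.exp (-1 / β) * Real.exp (-β * μ ^ 2 * k ^ 2))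
      Set.univ := by
  classical
  set C : ℝ → ℝ := fun β => β ^ (-2 : ℤ) * Real.exp (-1 / β) with hCdef
  have hCmeas : Measurable C := by
    rw [hCdef]
    simp only [zpow_neg, neg_div, div_eq_mul_inv, one_mul]
    fun_prop
  have hCnn : ∀ β ∈ Set.Ioc (0:ℝ) 1, 0 ≤ C β := by
    intro β hβ
    have hβ0 : 0 < β := hβ.1
    have h1 : (0:ℝ) < β ^ (-2 : ℤ) := zpow_pos hβ0 _
    have h2 : (0:ℝ) < Real.exp (-1 / β) := Real.exp_pos _
    rw [hCdef]
    positivity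
  have hCle : ∀ β ∈ Set.Ioc (0:ℝ) 1, C β ≤ 6 := by
    intro β hβ
    obtain ⟨hβ0, hβ1⟩ := hβ
    have hx : (0:ℝ) ≤ 1 / β := by positivity
    have hcube : (1/β) ^ 3 / 6 ≤ Real.exp (1/β) := by
      have h := Real.sum_le_exp_of_nonneg hx 4
      have h2 : (1/β) ^ 3 / 6 ≤ ∑ i ∈ Finset.range 4, (1/β) ^ i / Nat.factorial i := by
        have := Finset.single_le_sum (f := fun i => (1/β) ^ i / (Nat.factorial i : ℝ))
          (fun i _ => by positivity) (Finset.mem_range.mpr (by norm_num : (3:ℕ) < 4))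
        norm_num [Nat.factorial] at this ⊢
        linarith
      linarith
    have h3 : ((6:ℝ) * β ^ 3)⁻¹ ≤ Real.exp (1/β) := by
      have e : ((6:ℝ) * β ^ 3)⁻¹ = (1/β) ^ 3 / 6 := by
        field_simp
      rw [e]; exact hcube
    have hexp : Real.exp (-1/β) ≤ 6 * β ^ 3 := by
      rw [neg_div, Real.exp_neg]
      exact inv_le_of_inv_le₀ (by positivity) h3
    have hz : β ^ (-2:ℤ) = (β^2)⁻¹ := by
      rw [show (-2:ℤ) = -((2:ℕ):ℤ) by norm_num, zpow_neg, zpow_natCast]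
    rw [hCdef]
    simp only [hz]
    calc (β^2)⁻¹ * Real.exp (-1/β) ≤ (β^2)⁻¹ * (6 * β^3) := by
          exact mul_le_mul_of_nonneg_left hexp (by positivity)
      _ = 6 * β := by field_simp
      _ ≤ 6 := by linarith
  have hCb : ∀ β ∈ Set.Ioc (0:ℝ) 1, ∀ n : ℕ, |C β * (-β)^n| ≤ 6 := by
    intro β hβ n
    rw [abs_mul, abs_of_nonneg (hCnn β hβ), abs_pow, abs_neg, abs_of_nonneg hβ.1.le]
    have h1 : β ^ n ≤ 1 := pow_le_one₀ hβ.1.le hβ.2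
    nlinarith [hCnn β hβ, hCle β hβ, pow_nonneg hβ.1.le n]
  have hInt : ∀ n : ℕ, Integrable (fun β => C β * (-β)^n)
      (volume.restrict (Set.Ioc (0:ℝ) 1)) := by
    intro n
    refine Integrable.mono' (integrable_const 6)
      ((hCmeas.mul ((measurable_id.neg).pow_const n)).aestronglyMeasurable) ?_
    refine (ae_restrict_iff' measurableSet_Ioc).2 (Filter.Eventually.of_forall ?_)
    intro β hβ
    simpa only [Real.norm_eq_abs] using hCb β hβ n
  have hIb : ∀ n : ℕ, |∫ β in Set.Ioc (0:ℝ) 1, C β * (-β)^n| ≤ 6 := by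
    intro n
    have h := norm_integral_le_of_norm_le_const (μ := volume.restrict (Set.Ioc (0:ℝ) 1))
      (C := 6) (f := fun β => C β * (-β)^n) ?_
    · simpa [Real.norm_eq_abs, Real.volume_Ioc] using h
    · refine (ae_restrict_iff' measurableSet_Ioc).2 (Filter.Eventually.of_forall ?_)
      intro β hβ
      simpa only [Real.norm_eq_abs] using hCb β hβ n
  set b : ℕ → ℝ := fun n => (∫ β in Set.Ioc (0:ℝ) 1, C β * (-β)^n) / Nat.factorial n with hbdef
  have hbb : ∀ n, |b n| ≤ 6 / Nat.factorial n := by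
    intro n
    rw [hbdef]
    simp only [abs_div, Nat.abs_cast]
    gcongr
    exact hIb n
  have key : ∀ a : ℝ, (∫ β in Set.Ioc (0:ℝ) 1, C β * Real.exp (-(β * a)))
      = ∑' n : ℕ, b n * a ^ n := by
    intro a
    set Fn : ℕ → ℝ → ℝ := fun n β => C β * ((-(β * a)) ^ n / Nat.factorial n) with hFndef
    have hFnrw : ∀ n, Fn n = fun β => (C β * (-β)^n / Nat.factorial n) * a ^ n := by
      intro n
      funext β
      show C β * ((-(β * a)) ^ n / Nat.factorial n) = _
      rw [show -(β * a) = (-β) * a by ring, mul_pow]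
      ring
    have hFnInt : ∀ n, Integrable (Fn n) (volume.restrict (Set.Ioc (0:ℝ) 1)) := by
      intro n
      rw [hFnrw n]
      exact ((hInt n).div_const _).mul_const _
    have hptbd : ∀ n, ∀ β ∈ Set.Ioc (0:ℝ) 1, ‖Fn n β‖ ≤ 6 * (|a| ^ n / Nat.factorial n) := by
      intro n β hβ
      simp only [hFnrw n]
      rw [Real.norm_eq_abs, abs_mul, abs_div, Nat.abs_cast, abs_pow]
      have step : |C β * (-β)^n| / (Nat.factorial n : ℝ) * |a| ^ n
          ≤ 6 / (Nat.factorial n : ℝ) * |a| ^ n := by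
        gcongr
        exact hCb β hβ n
      calc |C β * (-β)^n| / (Nat.factorial n : ℝ) * |a| ^ n
          ≤ 6 / (Nat.factorial n : ℝ) * |a| ^ n := step
        _ = 6 * (|a| ^ n / Nat.factorial n) := by ring
    have hnorm : ∀ n, (∫ β in Set.Ioc (0:ℝ) 1, ‖Fn n β‖) ≤ 6 * (|a| ^ n / Nat.factorial n) := by
      intro n
      calc (∫ β in Set.Ioc (0:ℝ) 1, ‖Fn n β‖)
          ≤ ∫ _β in Set.Ioc (0:ℝ) 1, 6 * (|a| ^ n / Nat.factorial n) := by
            refine integral_mono_of_nonneg (Filter.Eventually.of_forall fun β => norm_nonneg _)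
              (integrable_const _) ?_
            refine (ae_restrict_iff' measurableSet_Ioc).2 (Filter.Eventually.of_forall ?_)
            exact fun β hβ => hptbd n β hβ
        _ = 6 * (|a| ^ n / Nat.factorial n) := by
            simp [Real.volume_Ioc]
    have hsum : Summable fun n => ∫ β in Set.Ioc (0:ℝ) 1, ‖Fn n β‖ :=
      Summable.of_nonneg_of_le (fun n => integral_nonneg fun β => norm_nonneg _)
        hnorm ((Real.summable_pow_div_factorial |a|).mul_left 6)
    have hswap := integral_tsum_of_summable_integral_norm hFnInt hsum
    have hpt : ∀ β : ℝ, ∑' n, Fn n β = C β * Real.exp (-(β * a)) := by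
      intro β
      show (∑' n, C β * ((-(β * a)) ^ n / Nat.factorial n)) = _
      rw [tsum_mul_left]
      congr 1
      rw [Real.exp_eq_exp_ℝ, NormedSpace.exp_eq_tsum_div]
    have hterm : ∀ n, (∫ β in Set.Ioc (0:ℝ) 1, Fn n β) = b n * a ^ n := by
      intro n
      simp only [hFnrw n]
      rw [integral_mul_const, integral_div, hbdef]
    calc (∫ β in Set.Ioc (0:ℝ) 1, C β * Real.exp (-(β * a)))
        = ∫ β in Set.Ioc (0:ℝ) 1, ∑' n, Fn n β := by
          refine integral_congr_ae (Filter.Eventually.of_forall fun β => ?_)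
          exact (hpt β).symm
      _ = ∑' n, ∫ β in Set.Ioc (0:ℝ) 1, Fn n β := hswap.symm
      _ = ∑' n, b n * a ^ n := tsum_congr hterm
  set c : ℕ → ℝ := fun n => b n * (μ ^ 2) ^ n with hcdef
  have hrad : (FormalMultilinearSeries.ofScalars ℝ c).radius = ⊤ := by
    apply FormalMultilinearSeries.radius_eq_top_of_summable_norm
    intro r
    refine Summable.of_nonneg_of_le (fun n => ?_) (fun n => ?_)
      ((Real.summable_pow_div_factorial (μ ^ 2 * r)).mul_left 6)
    · positivity
    · rw [FormalMultilinearSeries.ofScalars_norm, Real.norm_eq_abs, hcdef]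
      calc |b n * (μ ^ 2) ^ n| * (r:ℝ) ^ n
          ≤ (6 / Nat.factorial n * (μ ^ 2) ^ n) * (r:ℝ) ^ n := by
            rw [abs_mul, abs_pow, abs_of_nonneg (sq_nonneg μ)]
            gcongr
            exact hbb n
        _ = 6 * ((μ ^ 2 * r) ^ n / Nat.factorial n) := by
            rw [mul_pow]; ring
  have h0 : (0 : ENNReal) < (FormalMultilinearSeries.ofScalars ℝ c).radius := by
    rw [hrad]; exact ENNReal.zero_lt_top
  have hball := (FormalMultilinearSeries.ofScalars ℝ c).hasFPowerSeriesOnBall h0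
  have hAn : AnalyticOnNhd ℝ (FormalMultilinearSeries.ofScalars ℝ c).sum Set.univ := by
    intro x _
    refine hball.analyticAt_of_mem ?_
    rw [hrad]
    exact EMetric.mem_ball.2 (edist_lt_top x 0)
  have hsq : AnalyticOnNhd ℝ (fun k : ℝ => k ^ 2) Set.univ := analyticOnNhd_id.pow 2
  have hfinal := hAn.comp hsq (Set.mapsTo_univ _ _)
  have hsumval : ∀ x : ℝ, (FormalMultilinearSeries.ofScalars ℝ c).sum x
      = ∑' n, c n * x ^ n := by
    intro x
    simpa [FormalMultilinearSeries.ofScalarsSum, smul_eq_mul]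
      using FormalMultilinearSeries.ofScalars_sum_eq (E := ℝ) c x
  have heq : (fun k : ℝ =>
        ∫ β in (0 : ℝ)..1, β ^ (-2 : ℤ) * Real.exp (-1 / β) * Real.exp (-β * μ ^ 2 * k ^ 2))
      = ((FormalMultilinearSeries.ofScalars ℝ c).sum ∘ fun k : ℝ => k ^ 2) := by
    funext k
    show (∫ β in (0:ℝ)..1, C β * Real.exp (-β * μ ^ 2 * k ^ 2)) = _
    rw [intervalIntegral.integral_of_le (by norm_num : (0:ℝ) ≤ 1)]
    have hre : ∀ β : ℝ, -β * μ ^ 2 * k ^ 2 = -(β * (μ ^ 2 * k ^ 2)) := fun β => by ring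
    simp_rw [hre]
    rw [key (μ ^ 2 * k ^ 2), Function.comp_apply, hsumval (k ^ 2)]
    refine tsum_congr fun n => ?_
    rw [hcdef]
    simp only [mul_pow]
    ring
  rw [heq]
  exact hfinal
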